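/- Let n ≥ 1 and let χ be a ℂ-linear functional on the vector space C^∞(𝕋ⁿ; ℂ) of smooth 2π-periodic functions on ℝⁿ such that χ(∂_{x_ℓ} f) = 0 for every f ∈ C^∞(𝕋ⁿ; ℂ) and every ℓ ∈ {1, …, n}. Then for every f ∈ C^∞(𝕋ⁿ; ℂ), χ(f) = c ∫_{[0,2π]^n} f(x) dx, where c = (2π)^{−n} χ(1). In particular, χ is a constant multiple of integration over the torus. -/

import Mathlib

set_option synthInstance.maxHeartbeats 1000000
set_option maxHeartbeats 1000000
set_option linter.unusedSectionVars false
set_option linter.unusedVariables false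


open MeasureTheory Real intervalIntegral Metric Set

/-- The space `C^∞(𝕋ⁿ; ℂ)` of smooth functions on `ℝⁿ` that are `2π`-periodic in each
variable, as a `ℂ`-submodule of all functions `ℝⁿ → ℂ`. -/
noncomputable def SmoothPeriodic (n : ℕ) : Submodule ℂ ((Fin n → ℝ) → ℂ) where
  carrier := {f | ContDiff ℝ (⊤ : ℕ∞) f ∧
    ∀ (x : Fin n → ℝ) (ℓ : Fin n), f (x + Pi.single ℓ (2 * π)) = f x}
  add_mem' := by
    rintro f g ⟨hf, hf'⟩ ⟨hg, hg'⟩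
    exact ⟨hf.add hg, fun x ℓ => by simp [hf' x ℓ, hg' x ℓ]⟩
  zero_mem' := ⟨contDiff_const, fun _ _ => rfl⟩
  smul_mem' := by
    rintro c f ⟨hf, hf'⟩
    refine ⟨?_, fun x ℓ => by simp [hf' x ℓ]⟩
    show ContDiff ℝ (⊤ : ℕ∞) fun x => c • f x
    exact hf.const_smul c



universe u

section Param

variable {E F : Type*} [NormedAddCommGroup E] [NormedSpace ℝ E] [ProperSpace E]
  [NormedAddCommGroup F] [NormedSpace ℝ F] [CompleteSpace F]

set_option synthInstance.maxHeartbeats 1000000 in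
omit [CompleteSpace F] in
theorem param_hasFDerivAt {φ : E → ℝ → F} {φ' : E → ℝ → (E →L[ℝ] F)} {a b : ℝ}
    (hφ : Continuous (Function.uncurry φ)) (hφ' : Continuous (Function.uncurry φ'))
    (hd : ∀ x t, HasFDerivAt (fun y => φ y t) (φ' x t) x) (x₀ : E) :
    HasFDerivAt (fun x => ∫ t in a..b, φ x t) (∫ t in a..b, φ' x₀ t) x₀ := by
  have hK : IsCompact (closedBall x₀ 1 ×ˢ uIcc a b) := (isCompact_closedBall x₀ 1).prod isCompact_uIcc
  obtain ⟨C, hC⟩ := hK.exists_bound_of_continuousOn hφ'.continuousOn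
  apply intervalIntegral.hasFDerivAt_integral_of_dominated_of_fderiv_le
    (F := φ) (F' := φ') (x₀ := x₀) (bound := fun _ => C) (s := ball x₀ 1) (ball_mem_nhds x₀ one_pos)
  · exact Filter.Eventually.of_forall fun x =>
      (hφ.comp (Continuous.prodMk_right x)).aestronglyMeasurable
  · exact (hφ.comp (Continuous.prodMk_right x₀)).intervalIntegrable _ _
  · exact (hφ'.comp (Continuous.prodMk_right x₀)).aestronglyMeasurable
  · refine Filter.Eventually.of_forall fun t ht x hx => ?_
    exact hC ⟨x, t⟩ ⟨ball_subset_closedBall hx, uIoc_subset_uIcc ht⟩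
  · exact intervalIntegrable_const
  · exact Filter.Eventually.of_forall fun t ht x hx => hd x t

end Param

theorem param_contDiff_nat {E : Type u} [NormedAddCommGroup E] [NormedSpace ℝ E]
    [ProperSpace E] (k : ℕ) :
    ∀ {F : Type u} [NormedAddCommGroup F] [NormedSpace ℝ F] [CompleteSpace F]
      {φ : E × ℝ → F}, ContDiff ℝ (⊤ : ℕ∞) φ → ∀ a b : ℝ,
    ContDiff ℝ (k : ℕ) (fun x => ∫ t in a..b, φ (x, t)) := by
  induction k with
  | zero =>
    intro F _ _ _ φ hφ a b
    rw [Nat.cast_zero, contDiff_zero]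
    exact continuous_parametric_intervalIntegral_of_continuous'
      (f := fun x t => φ (x, t)) hφ.continuous a b
  | succ k ih =>
    intro F _ _ _ φ hφ a b
    set ψ : E × ℝ → (E →L[ℝ] F) := fun p => (fderiv ℝ φ p).comp (ContinuousLinearMap.inl ℝ E ℝ)
      with hψdef
    have hψ : ContDiff ℝ (⊤ : ℕ∞) ψ := by
      apply ContDiff.clm_comp _ contDiff_const
      exact (hφ.fderiv_right (m := (⊤ : ℕ∞)) (by simp))
    have hderiv : ∀ x₀ : E, HasFDerivAt (fun x => ∫ t in a..b, φ (x, t))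
        (∫ t in a..b, ψ (x₀, t)) x₀ := by
      intro x₀
      apply param_hasFDerivAt (φ := fun x t => φ (x, t)) (φ' := fun x t => ψ (x, t))
        hφ.continuous hψ.continuous
      intro x t
      exact ((hφ.differentiable (by simp)) (x, t)).hasFDerivAt.comp x
        (hasFDerivAt_prodMk_left x t)
    have hcast : (k : WithTop ℕ∞) + 1 = ((k + 1 : ℕ) : WithTop ℕ∞) := by push_cast; ring
    rw [← hcast, contDiff_succ_iff_fderiv]
    refine ⟨fun x => (hderiv x).differentiableAt, by simp, ?_⟩
    have : (fderiv ℝ fun x => ∫ t in a..b, φ (x, t)) = fun x₀ => ∫ t in a..b, ψ (x₀, t) :=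
      funext fun x₀ => (hderiv x₀).fderiv
    rw [this]
    exact ih hψ a b

theorem param_contDiff {E F : Type u} [NormedAddCommGroup E] [NormedSpace ℝ E]
    [ProperSpace E] [NormedAddCommGroup F] [NormedSpace ℝ F] [CompleteSpace F]
    {φ : E × ℝ → F} (hφ : ContDiff ℝ (⊤ : ℕ∞) φ) (a b : ℝ) :
    ContDiff ℝ (⊤ : ℕ∞) (fun x => ∫ t in a..b, φ (x, t)) := by
  rw [show (((⊤ : ℕ∞)) : WithTop ℕ∞) = (⊤ : ℕ∞) from rfl, contDiff_infty]
  exact fun k => param_contDiff_nat k hφ a b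
noncomputable section

def sVec (n : ℕ) (ℓ : Fin n) : Fin n → ℝ := Pi.single ℓ 1

def avgC {n : ℕ} (ℓ : Fin n) (f : (Fin n → ℝ) → ℂ) : (Fin n → ℝ) → ℂ :=
  fun x => (2 * π)⁻¹ • ∫ t in (0:ℝ)..(2*π), f (x + t • sVec n ℓ)

section AvgLemmas

variable {n : ℕ} {ℓ : Fin n} {f : (Fin n → ℝ) → ℂ}

theorem smul_sVec (ℓ : Fin n) (t : ℝ) : t • sVec n ℓ = Pi.single ℓ t := by
  unfold sVec
  ext j
  by_cases h : j = ℓ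
  · subst h; simp
  · simp [Pi.single_eq_of_ne h]

theorem continuous_lineMap (x : Fin n → ℝ) : Continuous (fun t : ℝ => x + t • sVec n ℓ) := by
  continuity

theorem line_periodic (hper : ∀ (x : Fin n → ℝ) (m : Fin n), f (x + Pi.single m (2 * π)) = f x)
    (x : Fin n → ℝ) : Function.Periodic (fun t => f (x + t • sVec n ℓ)) (2 * π) := by
  intro t
  have h : x + (t + 2 * π) • sVec n ℓ = (x + t • sVec n ℓ) + Pi.single ℓ (2 * π) := by
    rw [← smul_sVec ℓ (2*π), add_smul]; abel
  simp only [h, hper]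

theorem avgC_translate (v : Fin n → ℝ) (hv : ∀ y, f (y + v) = f y) (x : Fin n → ℝ) :
    avgC ℓ f (x + v) = avgC ℓ f x := by
  unfold avgC
  congr 1
  apply intervalIntegral.integral_congr
  intro t _
  show f (x + v + t • sVec n ℓ) = f (x + t • sVec n ℓ)
  have h : x + v + t • sVec n ℓ = (x + t • sVec n ℓ) + v := by abel
  rw [h, hv]

theorem avgC_shift (hper : ∀ (x : Fin n → ℝ) (m : Fin n), f (x + Pi.single m (2 * π)) = f x)
    (x : Fin n → ℝ) (s : ℝ) :
    avgC ℓ f (x + s • sVec n ℓ) = avgC ℓ f x := by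
  unfold avgC
  congr 1
  have h1 : ∀ t : ℝ, x + s • sVec n ℓ + t • sVec n ℓ = x + (t + s) • sVec n ℓ := by
    intro t; rw [add_smul]; abel
  simp only [h1]
  rw [intervalIntegral.integral_comp_add_right (fun u => f (x + u • sVec n ℓ)) s]
  have h2 := (line_periodic (ℓ := ℓ) hper x).intervalIntegral_add_eq s 0
  simpa [add_comm] using h2

theorem contDiff_line (hf : ContDiff ℝ (⊤ : ℕ∞) f) :
    ContDiff ℝ (⊤ : ℕ∞) (fun p : (Fin n → ℝ) × ℝ => f (p.1 + p.2 • sVec n ℓ)) :=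
  hf.comp (contDiff_fst.add (contDiff_snd.smul contDiff_const))

theorem avgC_contDiff (hf : ContDiff ℝ (⊤ : ℕ∞) f) : ContDiff ℝ (⊤ : ℕ∞) (avgC ℓ f) := by
  unfold avgC
  exact (param_contDiff (contDiff_line hf) 0 (2*π)).const_smul _

theorem avgC_continuous (hf : ContDiff ℝ (⊤ : ℕ∞) f) : Continuous (avgC ℓ f) :=
  (avgC_contDiff hf).continuous

theorem integral_line_eq (x : Fin n → ℝ) :
    ∫ t in (0:ℝ)..(2*π), f (x + t • sVec n ℓ) = (2 * π) • avgC ℓ f x := by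
  unfold avgC
  rw [smul_smul, mul_inv_cancel₀ (by positivity : (2:ℝ) * π ≠ 0), one_smul]

theorem mean_zero (hf : ContDiff ℝ (⊤ : ℕ∞) f)
    (hper : ∀ (x : Fin n → ℝ) (m : Fin n), f (x + Pi.single m (2 * π)) = f x)
    (x : Fin n → ℝ) :
    ∫ t in (0:ℝ)..(2*π), (f (x + t • sVec n ℓ) - avgC ℓ f (x + t • sVec n ℓ)) = 0 := by
  have hcf : Continuous f := hf.continuous
  have h1 : IntervalIntegrable (fun t => f (x + t • sVec n ℓ)) volume 0 (2*π) :=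
    (hcf.comp (continuous_lineMap x)).intervalIntegrable _ _
  have h2 : IntervalIntegrable (fun t => avgC ℓ f (x + t • sVec n ℓ)) volume 0 (2*π) :=
    ((avgC_continuous hf).comp (continuous_lineMap x)).intervalIntegrable _ _
  rw [intervalIntegral.integral_sub h1 h2]
  have h3 : ∀ t : ℝ, avgC ℓ f (x + t • sVec n ℓ) = avgC ℓ f x := fun t =>
    avgC_shift hper x t
  simp only [h3]
  rw [intervalIntegral.integral_const, integral_line_eq x]
  simp

end AvgLemmas
end
noncomputable section
namespace TorusProof

variable {n : ℕ} {ℓ : Fin n} {f : (Fin n → ℝ) → ℂ}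

/-- The periodic primitive of `f - avgC ℓ f` in direction `ℓ`. -/
def primC (ℓ : Fin n) (f : (Fin n → ℝ) → ℂ) : (Fin n → ℝ) → ℂ :=
  fun x => (2 * π)⁻¹ • ∫ t in (0:ℝ)..(2*π),
    t • (f (x + t • sVec n ℓ) - avgC ℓ f (x + t • sVec n ℓ))

section Prim

variable (hf : ContDiff ℝ (⊤ : ℕ∞) f)
  (hper : ∀ (x : Fin n → ℝ) (m : Fin n), f (x + Pi.single m (2 * π)) = f x)

include hf

theorem sub_avg_contDiff : ContDiff ℝ (⊤ : ℕ∞) (fun x => f x - avgC ℓ f x) :=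
  hf.sub (avgC_contDiff hf)

include hper

theorem sub_avg_per : ∀ (x : Fin n → ℝ) (m : Fin n),
    (fun x => f x - avgC ℓ f x) (x + Pi.single m (2 * π)) = (fun x => f x - avgC ℓ f x) x := by
  intro x m
  simp only
  rw [hper x m, avgC_translate (Pi.single m (2*π)) (fun y => hper y m) x]

theorem primC_contDiff : ContDiff ℝ (⊤ : ℕ∞) (primC ℓ f) := by
  have hh := sub_avg_contDiff (ℓ := ℓ) hf
  unfold primC
  refine ContDiff.const_smul _ ?_
  exact param_contDiff (contDiff_snd.smul (hh.comp
    (contDiff_fst.add (contDiff_snd.smul contDiff_const)))) 0 (2*π)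

theorem primC_per : ∀ (x : Fin n → ℝ) (m : Fin n),
    primC ℓ f (x + Pi.single m (2 * π)) = primC ℓ f x := by
  intro x m
  unfold primC
  congr 1
  apply intervalIntegral.integral_congr
  intro t _
  show t • ((fun y => f y - avgC ℓ f y) (x + Pi.single m (2*π) + t • sVec n ℓ)) = _
  have h : x + Pi.single m (2*π) + t • sVec n ℓ = (x + t • sVec n ℓ) + Pi.single m (2*π) := by abel
  rw [h, sub_avg_per hf hper]

theorem primC_fderiv (x : Fin n → ℝ) :
    fderiv ℝ (primC ℓ f) x (sVec n ℓ) = f x - avgC ℓ f x := by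
  set h : (Fin n → ℝ) → ℂ := fun y => f y - avgC ℓ f y with hdef
  have hh : ContDiff ℝ (⊤ : ℕ∞) h := sub_avg_contDiff hf
  have hhper : ∀ (y : Fin n → ℝ) (m : Fin n), h (y + Pi.single m (2 * π)) = h y :=
    sub_avg_per hf hper
  have hhd : Differentiable ℝ h := hh.differentiable (by simp)
  have hfdc : Continuous (fderiv ℝ h) := hh.continuous_fderiv (by simp)
  set φ' : (Fin n → ℝ) → ℝ → ((Fin n → ℝ) →L[ℝ] ℂ) :=
    fun y t => t • (fderiv ℝ h (y + t • sVec n ℓ)) with hφ'def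
  have hline : Continuous (fun p : (Fin n → ℝ) × ℝ => p.1 + p.2 • sVec n ℓ) :=
    continuous_fst.add (continuous_snd.smul continuous_const)
  have hcφ : Continuous (Function.uncurry fun y t => t • h (y + t • sVec n ℓ)) :=
    continuous_snd.smul (hh.continuous.comp hline)
  have hcφ' : Continuous (Function.uncurry φ') :=
    continuous_snd.smul (hfdc.comp hline)
  have hd : ∀ (y : Fin n → ℝ) (t : ℝ),
      HasFDerivAt (fun z => t • h (z + t • sVec n ℓ)) (φ' y t) y := by
    intro y t
    have h1 : HasFDerivAt (fun z : Fin n → ℝ => z + t • sVec n ℓ)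
        (ContinuousLinearMap.id ℝ (Fin n → ℝ)) y := (hasFDerivAt_id y).add_const _
    have h2 := ((hhd (y + t • sVec n ℓ)).hasFDerivAt.comp y h1).const_smul t
    rw [ContinuousLinearMap.comp_id] at h2
    exact h2
  have base := param_hasFDerivAt (a := 0) (b := 2*π) hcφ hcφ' hd x
  have hgd : HasFDerivAt (primC ℓ f)
      ((2 * π)⁻¹ • ∫ t in (0:ℝ)..(2*π), φ' x t) x := base.const_smul ((2*π)⁻¹ : ℝ)
  rw [hgd.fderiv]
  have hint : IntervalIntegrable (φ' x) volume 0 (2*π) :=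
    (hcφ'.comp (Continuous.prodMk_right x)).intervalIntegrable _ _
  rw [ContinuousLinearMap.smul_apply, ContinuousLinearMap.intervalIntegral_apply hint]
  have happ : ∀ t : ℝ, (φ' x t) (sVec n ℓ) = t • (fderiv ℝ h (x + t • sVec n ℓ) (sVec n ℓ)) := by
    intro t; simp [hφ'def]
  -- FTC
  have key : ∀ t : ℝ, HasDerivAt (fun u => u • h (x + u • sVec n ℓ))
      (h (x + t • sVec n ℓ) + t • (fderiv ℝ h (x + t • sVec n ℓ) (sVec n ℓ))) t := by
    intro t
    have hc : HasDerivAt (fun u : ℝ => x + u • sVec n ℓ) (sVec n ℓ) t := by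
      simpa using ((hasDerivAt_id t).smul_const (sVec n ℓ)).const_add x
    have hhc : HasDerivAt (fun u => h (x + u • sVec n ℓ))
        (fderiv ℝ h (x + t • sVec n ℓ) (sVec n ℓ)) t :=
      (hhd (x + t • sVec n ℓ)).hasFDerivAt.comp_hasDerivAt t hc
    have := (hasDerivAt_id t).smul hhc
    exact this.congr_deriv (by simp [add_comm])
  have hcont1 : Continuous (fun t : ℝ => h (x + t • sVec n ℓ)) :=
    hh.continuous.comp (continuous_lineMap x)
  have hcont2 : Continuous (fun t : ℝ => t • (fderiv ℝ h (x + t • sVec n ℓ) (sVec n ℓ))) := by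
    have : Continuous (fun t : ℝ => fderiv ℝ h (x + t • sVec n ℓ)) :=
      hfdc.comp (continuous_lineMap x)
    exact continuous_id.smul (this.clm_apply continuous_const)
  have hftc : ∫ t in (0:ℝ)..(2*π),
      (h (x + t • sVec n ℓ) + t • (fderiv ℝ h (x + t • sVec n ℓ) (sVec n ℓ)))
      = (2*π) • h (x + (2*π) • sVec n ℓ) - (0:ℝ) • h (x + (0:ℝ) • sVec n ℓ) := by
    exact intervalIntegral.integral_eq_sub_of_hasDerivAt (fun t _ => key t)
      ((hcont1.add hcont2).intervalIntegrable _ _)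
  have hsplit : ∫ t in (0:ℝ)..(2*π),
      (h (x + t • sVec n ℓ) + t • (fderiv ℝ h (x + t • sVec n ℓ) (sVec n ℓ)))
      = (∫ t in (0:ℝ)..(2*π), h (x + t • sVec n ℓ))
        + ∫ t in (0:ℝ)..(2*π), t • (fderiv ℝ h (x + t • sVec n ℓ) (sVec n ℓ)) :=
    intervalIntegral.integral_add (hcont1.intervalIntegrable _ _) (hcont2.intervalIntegrable _ _)
  have hmz : (∫ t in (0:ℝ)..(2*π), h (x + t • sVec n ℓ)) = 0 := mean_zero hf hper x
  have hper2π : x + (2*π) • sVec n ℓ = x + Pi.single ℓ (2*π) := by rw [smul_sVec]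
  have hB : (∫ t in (0:ℝ)..(2*π), t • (fderiv ℝ h (x + t • sVec n ℓ) (sVec n ℓ)))
      = (2*π) • h x := by
    have := hftc
    rw [hsplit, hmz, zero_add, hper2π, hhper x ℓ] at this
    simpa using this
  simp only [happ]
  rw [hB, smul_smul, inv_mul_cancel₀ (by positivity : (2:ℝ) * π ≠ 0), one_smul]

end Prim
end TorusProof
end
noncomputable section
namespace TorusProof

/-- The period box. -/
def box (n : ℕ) : Set (Fin n → ℝ) := Set.Icc (0 : Fin n → ℝ) (fun _ => 2 * π)

theorem isCompact_box (n : ℕ) : IsCompact (box n) := isCompact_Icc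

theorem insertNth_eq_add {m : ℕ} (ℓ : Fin (m+1)) (t : ℝ) (y : Fin m → ℝ) :
    Fin.insertNth ℓ t y = Fin.insertNth ℓ 0 y + t • sVec (m+1) ℓ := by
  ext j
  rcases eq_or_ne j ℓ with rfl | hj
  · simp [sVec]
  · obtain ⟨k, rfl⟩ := Fin.exists_succAbove_eq hj
    simp [Fin.insertNth_apply_succAbove, sVec,
      Pi.single_eq_of_ne (Fin.succAbove_ne ℓ k)]

theorem continuous_insertC {m : ℕ} (ℓ : Fin (m+1)) :
    Continuous (fun p : ℝ × (Fin m → ℝ) =>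
      (Fin.insertNth (α := fun _ => ℝ) ℓ p.1 p.2 : Fin (m+1) → ℝ)) :=
by
  apply continuous_pi
  intro j
  rcases eq_or_ne j ℓ with rfl | hj
  · simpa only [Fin.insertNth_apply_same] using continuous_fst
  · obtain ⟨k, rfl⟩ := Fin.exists_succAbove_eq hj
    simpa only [Fin.insertNth_apply_succAbove, Function.comp_def] using (continuous_apply k).comp continuous_snd

theorem box_decomp {m : ℕ} (ℓ : Fin (m+1)) (F : (Fin (m+1) → ℝ) → ℂ) (hF : Continuous F) :
    ∫ x in box (m+1), F x
      = ∫ t in Set.Icc (0:ℝ) (2*π), ∫ y in box m, F (Fin.insertNth ℓ t y) := by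
  set e := MeasurableEquiv.piFinSuccAbove (fun _ : Fin (m+1) => ℝ) ℓ with he
  have hmp : MeasurePreserving e volume volume :=
    volume_preserving_piFinSuccAbove (fun _ : Fin (m+1) => ℝ) ℓ
  have hset : box (m+1) = e ⁻¹' (Set.Icc (0:ℝ) (2*π) ×ˢ box m) := by
    ext x
    simp only [box, Set.mem_preimage, Set.mem_prod, Set.mem_Icc, Pi.le_def, he,
      MeasurableEquiv.piFinSuccAbove_apply]
    constructor
    · rintro ⟨h1, h2⟩
      exact ⟨⟨h1 ℓ, h2 ℓ⟩, fun j => h1 _, fun j => h2 _⟩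
    · rintro ⟨⟨h1, h2⟩, h3, h4⟩
      constructor
      · intro j
        rcases eq_or_ne j ℓ with rfl | hj
        · exact h1
        · obtain ⟨k, rfl⟩ := Fin.exists_succAbove_eq hj
          exact h3 k
      · intro j
        rcases eq_or_ne j ℓ with rfl | hj
        · exact h2
        · obtain ⟨k, rfl⟩ := Fin.exists_succAbove_eq hj
          exact h4 k
  set G : ℝ × (Fin m → ℝ) → ℂ := fun p => F (Fin.insertNth ℓ p.1 p.2) with hG
  have hGc : Continuous G := hF.comp (continuous_insertC ℓ)
  have hFe : ∀ x, F x = G (e x) := by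
    intro x
    show F x = F (Fin.insertNth ℓ (e x).1 (e x).2)
    rw [show Fin.insertNth ℓ (e x).1 (e x).2 = e.symm (e x) from rfl,
      MeasurableEquiv.symm_apply_apply]
  calc ∫ x in box (m+1), F x
      = ∫ x in e ⁻¹' (Set.Icc (0:ℝ) (2*π) ×ˢ box m), G (e x) := by
        rw [← hset]; exact setIntegral_congr_fun (isCompact_box (m+1)).measurableSet
          (fun x _ => hFe x)
    _ = ∫ p in Set.Icc (0:ℝ) (2*π) ×ˢ box m, G p :=
        hmp.setIntegral_preimage_emb e.measurableEmbedding G _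
    _ = ∫ t in Set.Icc (0:ℝ) (2*π), ∫ y in box m, F (Fin.insertNth ℓ t y) := by
        rw [Measure.volume_eq_prod ℝ (Fin m → ℝ)]
        apply setIntegral_prod
        apply hGc.continuousOn.integrableOn_compact
        exact isCompact_Icc.prod (isCompact_box m)

theorem box_avg {m : ℕ} (ℓ : Fin (m+1)) {f : (Fin (m+1) → ℝ) → ℂ}
    (hf : ContDiff ℝ (⊤ : ℕ∞) f)
    (hper : ∀ (x : Fin (m+1) → ℝ) (j : Fin (m+1)), f (x + Pi.single j (2 * π)) = f x) :
    ∫ x in box (m+1), avgC ℓ f x = ∫ x in box (m+1), f x := by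
  have hcf : Continuous f := hf.continuous
  rw [box_decomp ℓ _ (avgC_continuous hf), box_decomp ℓ f hcf]
  have hinner : ∀ (t : ℝ) (y : Fin m → ℝ), avgC ℓ f (Fin.insertNth ℓ t y)
      = (2 * π)⁻¹ • ∫ s in (0:ℝ)..(2*π), f (Fin.insertNth ℓ s y) := by
    intro t y
    rw [insertNth_eq_add, avgC_shift hper]
    unfold avgC
    congr 1
    apply intervalIntegral.integral_congr
    intro s _
    show f (Fin.insertNth ℓ 0 y + s • sVec (m+1) ℓ) = f (Fin.insertNth ℓ s y)
    rw [← insertNth_eq_add]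
  have hswap : ∫ t in Set.Icc (0:ℝ) (2*π), ∫ y in box m, f (Fin.insertNth ℓ t y)
      = ∫ y in box m, ∫ t in Set.Icc (0:ℝ) (2*π), f (Fin.insertNth ℓ t y) := by
    apply MeasureTheory.integral_integral_swap
    rw [Measure.prod_restrict]
    apply ((hcf.comp (continuous_insertC ℓ)).continuousOn).integrableOn_compact
    exact isCompact_Icc.prod (isCompact_box m)
  rw [hswap]
  have hIcc : ∀ y : Fin m → ℝ, (∫ t in Set.Icc (0:ℝ) (2*π), f (Fin.insertNth ℓ t y))
      = ∫ s in (0:ℝ)..(2*π), f (Fin.insertNth ℓ s y) := by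
    intro y
    rw [intervalIntegral.integral_of_le (by positivity), ← integral_Icc_eq_integral_Ioc]
  calc ∫ t in Set.Icc (0:ℝ) (2*π), ∫ y in box m, avgC ℓ f (Fin.insertNth ℓ t y)
      = ∫ _t in Set.Icc (0:ℝ) (2*π), ∫ y in box m,
          (2 * π)⁻¹ • ∫ s in (0:ℝ)..(2*π), f (Fin.insertNth ℓ s y) := by
        apply setIntegral_congr_fun measurableSet_Icc
        intro t _
        exact integral_congr_ae (Filter.Eventually.of_forall fun y => hinner t y)
    _ = (volume (Set.Icc (0:ℝ) (2*π))).toReal •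
          ∫ y in box m, (2 * π)⁻¹ • ∫ s in (0:ℝ)..(2*π), f (Fin.insertNth ℓ s y) :=
        setIntegral_const _
    _ = ∫ y in box m, ∫ s in (0:ℝ)..(2*π), f (Fin.insertNth ℓ s y) := by
        rw [MeasureTheory.integral_smul, Real.volume_Icc, sub_zero,
          ENNReal.toReal_ofReal (by positivity), smul_smul,
          mul_inv_cancel₀ (by positivity : (2:ℝ) * π ≠ 0), one_smul]
    _ = ∫ y in box m, ∫ t in Set.Icc (0:ℝ) (2*π), f (Fin.insertNth ℓ t y) := by
        exact integral_congr_ae (Filter.Eventually.of_forall fun y => (hIcc y).symm)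

end TorusProof
end
noncomputable section
namespace TorusProof

variable {n : ℕ}

theorem mem_SP {g : (Fin n → ℝ) → ℂ} : g ∈ SmoothPeriodic n ↔
    (ContDiff ℝ (⊤ : ℕ∞) g ∧
      ∀ (x : Fin n → ℝ) (m : Fin n), g (x + Pi.single m (2 * π)) = g x) := Iff.rfl

theorem const_of_invariant {F : (Fin n → ℝ) → ℂ}
    (hinv : ∀ (ℓ : Fin n) (x : Fin n → ℝ) (s : ℝ), F (x + s • sVec n ℓ) = F x)
    (x : Fin n → ℝ) : F x = F 0 := by
  have hsum : ∀ s : Finset (Fin n), F (∑ i ∈ s, x i • sVec n i) = F 0 := by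
    intro s
    induction s using Finset.induction_on with
    | empty => simp
    | @insert j s hj ih =>
      rw [Finset.sum_insert hj, add_comm, hinv j _ (x j), ih]
  have hx : x = ∑ i ∈ Finset.univ, x i • sVec n i := by
    ext j
    rw [Finset.sum_apply]
    simp [sVec, Pi.single_apply]
  rw [hx, hsum]

/-- Iterated averaging over a list of coordinates. -/
def avgList : List (Fin n) → ((Fin n → ℝ) → ℂ) → ((Fin n → ℝ) → ℂ)
  | [], f => f
  | (ℓ :: L), f => avgList L (avgC ℓ f)

theorem avgList_contDiff : ∀ (L : List (Fin n)) {f : (Fin n → ℝ) → ℂ},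
    ContDiff ℝ (⊤ : ℕ∞) f → ContDiff ℝ (⊤ : ℕ∞) (avgList L f)
  | [], f, hf => hf
  | (ℓ :: L), f, hf => avgList_contDiff L (avgC_contDiff hf)

theorem avgList_per : ∀ (L : List (Fin n)) {f : (Fin n → ℝ) → ℂ},
    (∀ (x : Fin n → ℝ) (m : Fin n), f (x + Pi.single m (2 * π)) = f x) →
    ∀ (x : Fin n → ℝ) (m : Fin n), avgList L f (x + Pi.single m (2 * π)) = avgList L f x
  | [], f, hper => hper
  | (ℓ :: L), f, hper => avgList_per L
      (fun x m => avgC_translate (Pi.single m (2*π)) (fun y => hper y m) x)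

theorem avgList_translate : ∀ (L : List (Fin n)) {f : (Fin n → ℝ) → ℂ} (v : Fin n → ℝ),
    (∀ y, f (y + v) = f y) → ∀ x, avgList L f (x + v) = avgList L f x
  | [], f, v, hv, x => hv x
  | (ℓ :: L), f, v, hv, x => avgList_translate L v (fun y => avgC_translate v hv y) x

theorem avgList_inv : ∀ (L : List (Fin n)) {f : (Fin n → ℝ) → ℂ},
    ContDiff ℝ (⊤ : ℕ∞) f →
    (∀ (x : Fin n → ℝ) (m : Fin n), f (x + Pi.single m (2 * π)) = f x) →
    ∀ ℓ ∈ L, ∀ (x : Fin n → ℝ) (s : ℝ), avgList L f (x + s • sVec n ℓ) = avgList L f x := by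
  intro L
  induction L with
  | nil => intro f _ _ ℓ hℓ; exact absurd hℓ List.not_mem_nil
  | cons j L ih =>
    intro f hf hper ℓ hℓ x s
    rcases List.mem_cons.1 hℓ with rfl | hℓ
    · exact avgList_translate L (s • sVec n ℓ) (fun y => avgC_shift hper y s) x
    · exact ih (avgC_contDiff hf)
        (fun x m => avgC_translate (Pi.single m (2*π)) (fun y => hper y m) x) ℓ hℓ x s

theorem avgList_box {m : ℕ} : ∀ (L : List (Fin (m+1))) {f : (Fin (m+1) → ℝ) → ℂ},
    ContDiff ℝ (⊤ : ℕ∞) f →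
    (∀ (x : Fin (m+1) → ℝ) (j : Fin (m+1)), f (x + Pi.single j (2 * π)) = f x) →
    ∫ x in box (m+1), avgList L f x = ∫ x in box (m+1), f x := by
  intro L
  induction L with
  | nil => intro f _ _; rfl
  | cons j L ih =>
    intro f hf hper
    rw [show avgList (j :: L) f = avgList L (avgC j f) from rfl,
      ih (avgC_contDiff hf)
        (fun x m => avgC_translate (Pi.single m (2*π)) (fun y => hper y m) x),
      box_avg j hf hper]

end TorusProof
end
namespace TorusProof

variable {n : ℕ}

theorem chi_step (χ : SmoothPeriodic n →ₗ[ℂ] ℂ)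
    (hχ : ∀ (f : SmoothPeriodic n) (ℓ : Fin n)
      (hd : (fun x => fderiv ℝ (f : (Fin n → ℝ) → ℂ) x (Pi.single ℓ 1)) ∈ SmoothPeriodic n),
      χ ⟨fun x => fderiv ℝ (f : (Fin n → ℝ) → ℂ) x (Pi.single ℓ 1), hd⟩ = 0)
    {f : (Fin n → ℝ) → ℂ} (hf : ContDiff ℝ (⊤ : ℕ∞) f)
    (hper : ∀ (x : Fin n → ℝ) (m : Fin n), f (x + Pi.single m (2 * π)) = f x)
    (ℓ : Fin n) (hmf : f ∈ SmoothPeriodic n) (hma : avgC ℓ f ∈ SmoothPeriodic n) :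
    χ ⟨avgC ℓ f, hma⟩ = χ ⟨f, hmf⟩ := by
  have hmP : primC ℓ f ∈ SmoothPeriodic n := ⟨primC_contDiff hf hper, primC_per hf hper⟩
  set P : SmoothPeriodic n := ⟨primC ℓ f, hmP⟩ with hP
  have hfd : (fun x => fderiv ℝ (P : (Fin n → ℝ) → ℂ) x (Pi.single ℓ 1))
      = fun x => f x - avgC ℓ f x := by
    funext x
    exact primC_fderiv hf hper x
  have hd : (fun x => fderiv ℝ (P : (Fin n → ℝ) → ℂ) x (Pi.single ℓ 1)) ∈ SmoothPeriodic n := by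
    rw [hfd]
    exact ⟨sub_avg_contDiff hf, sub_avg_per hf hper⟩
  have h0 := hχ P ℓ hd
  have heq : (⟨fun x => fderiv ℝ (P : (Fin n → ℝ) → ℂ) x (Pi.single ℓ 1), hd⟩ :
      SmoothPeriodic n) = ⟨f, hmf⟩ - ⟨avgC ℓ f, hma⟩ := by
    apply Subtype.ext
    show (fun x => fderiv ℝ (P : (Fin n → ℝ) → ℂ) x (Pi.single ℓ 1))
      = ((⟨f, hmf⟩ - ⟨avgC ℓ f, hma⟩ : SmoothPeriodic n) : (Fin n → ℝ) → ℂ)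
    rw [hfd]
    rfl
  rw [heq, map_sub, sub_eq_zero] at h0
  exact h0.symm

theorem chi_avgList (χ : SmoothPeriodic n →ₗ[ℂ] ℂ)
    (hχ : ∀ (f : SmoothPeriodic n) (ℓ : Fin n)
      (hd : (fun x => fderiv ℝ (f : (Fin n → ℝ) → ℂ) x (Pi.single ℓ 1)) ∈ SmoothPeriodic n),
      χ ⟨fun x => fderiv ℝ (f : (Fin n → ℝ) → ℂ) x (Pi.single ℓ 1), hd⟩ = 0) :
    ∀ (L : List (Fin n)) {f : (Fin n → ℝ) → ℂ} (hmf : f ∈ SmoothPeriodic n)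
      (hmL : avgList L f ∈ SmoothPeriodic n),
      χ ⟨avgList L f, hmL⟩ = χ ⟨f, hmf⟩ := by
  intro L
  induction L with
  | nil => intro f hmf hmL; rfl
  | cons j L ih =>
    intro f hmf hmL
    have hma : avgC j f ∈ SmoothPeriodic n :=
      ⟨avgC_contDiff hmf.1, fun x m =>
        avgC_translate (Pi.single m (2*π)) (fun y => hmf.2 y m) x⟩
    have h1 : χ ⟨avgList (j :: L) f, hmL⟩ = χ ⟨avgC j f, hma⟩ := ih hma hmL
    rw [h1, chi_step χ hχ hmf.1 hmf.2 j hmf hma]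

end TorusProof

/-- Let `n ≥ 1` and let `χ` be a `ℂ`-linear functional on `C^∞(𝕋ⁿ; ℂ)` such
that `χ(∂_{x_ℓ} f) = 0` for every `f ∈ C^∞(𝕋ⁿ; ℂ)` and every `ℓ`. Then for every
`f ∈ C^∞(𝕋ⁿ; ℂ)`, `χ(f) = c ∫_{[0,2π]^n} f(x) dx` where `c = (2π)^{−n} χ(1)`. -/
theorem linear_functional_vanishing_on_derivs_is_integration
    (n : ℕ) (hn : 1 ≤ n) (χ : SmoothPeriodic n →ₗ[ℂ] ℂ)
    (hχ : ∀ (f : SmoothPeriodic n) (ℓ : Fin n)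
      (hd : (fun x => fderiv ℝ (f : (Fin n → ℝ) → ℂ) x (Pi.single ℓ 1)) ∈ SmoothPeriodic n),
      χ ⟨fun x => fderiv ℝ (f : (Fin n → ℝ) → ℂ) x (Pi.single ℓ 1), hd⟩ = 0)
    (hone : (fun _ => (1 : ℂ)) ∈ SmoothPeriodic n) :
    ∀ f : SmoothPeriodic n,
      χ f = (((2 * π) ^ n : ℝ))⁻¹ * χ ⟨fun _ => (1 : ℂ), hone⟩
        * ∫ x in Set.Icc (0 : Fin n → ℝ) (fun _ => 2 * π), (f : (Fin n → ℝ) → ℂ) x := by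
  open TorusProof in
  intro f
  obtain ⟨m, rfl⟩ : ∃ m, n = m + 1 := ⟨n - 1, by omega⟩
  obtain ⟨hf, hper⟩ := f.2
  rw [show Set.Icc (0 : Fin (m+1) → ℝ) (fun _ => 2 * π) = box (m+1) from rfl]
  set L : List (Fin (m+1)) := List.finRange (m+1) with hL
  set F : (Fin (m+1) → ℝ) → ℂ := avgList L f.val with hF
  have hFc : ContDiff ℝ (⊤ : ℕ∞) F := avgList_contDiff L hf
  have hFper : ∀ (x : Fin (m+1) → ℝ) (j : Fin (m+1)),
      F (x + Pi.single j (2 * π)) = F x := avgList_per L hper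
  have hmemF : F ∈ SmoothPeriodic (m+1) := ⟨hFc, hFper⟩
  have hinv : ∀ (ℓ : Fin (m+1)) (x : Fin (m+1) → ℝ) (s : ℝ),
      F (x + s • sVec (m+1) ℓ) = F x := fun ℓ x s =>
    avgList_inv L hf hper ℓ (List.mem_finRange ℓ) x s
  have hconst : ∀ x, F x = F 0 := const_of_invariant hinv
  have hchi : χ ⟨F, hmemF⟩ = χ f := by
    have := chi_avgList χ hχ L f.2 hmemF
    convert this using 2
  have hbox : ∫ x in box (m+1), F x = ∫ x in box (m+1), f.val x := avgList_box L hf hper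
  have hvol : (volume (box (m+1))).toReal = (2*π)^(m+1) := by
    rw [box, Real.volume_Icc_pi_toReal (fun i => by positivity)]
    simp [Finset.prod_const]
  have hconstint : ∫ x in box (m+1), F x = ((2*π)^(m+1) : ℝ) • F 0 := by
    rw [setIntegral_congr_fun (isCompact_box (m+1)).measurableSet (fun x _ => hconst x),
      setIntegral_const, measureReal_def, hvol]
  have hF0 : F 0 = (((2*π)^(m+1) : ℝ))⁻¹ • ∫ x in box (m+1), f.val x := by
    rw [← hbox, hconstint, smul_smul,
      inv_mul_cancel₀ (by positivity : ((2:ℝ)*π)^(m+1) ≠ 0), one_smul]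
  have hsmul : (⟨F, hmemF⟩ : SmoothPeriodic (m+1)) = F 0 • ⟨fun _ => 1, hone⟩ := by
    apply Subtype.ext
    show F = F 0 • (fun _ => (1:ℂ))
    funext x
    rw [hconst x]
    simp
  rw [← hchi, hsmul, LinearMap.map_smul]
  rw [hF0]
  show ((((2*π)^(m+1) : ℝ))⁻¹ • ∫ x in box (m+1), f.val x) • χ ⟨fun _ => 1, hone⟩ = _
  rw [smul_eq_mul]
  have : ((((2*π)^(m+1) : ℝ))⁻¹ • ∫ x in box (m+1), f.val x)
      = ((((2*π)^(m+1) : ℝ))⁻¹ : ℂ) * ∫ x in box (m+1), f.val x := by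
    rw [Complex.real_smul]
    norm_num
  rw [this]
  push_cast
  ring
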